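/- arXiv:1211.6780 — 3 statements merged into one kernel-verified Lean document; each statement's English description precedes it below -/
import Mathlib

section
/- Fix 0 ≤ s < 1 with √(1−s²) > (n−1)/n, set κ := n√(1−s²) − (n−1) ∈ (0,1], and let A_s = {(x₁,x₂,x₃) ∈ S² : x₃ ≤ −√(1−s²)}. Suppose the initial sphere points of a continued trajectory of the planar point-vortex gradient flow satisfy P_i(0) ∈ A_s for all i = 1,…,2n. Then all vortices have been annihilated by the time T = ln(1/κ): every collision time of the continued trajectory is at most ln(1/κ), and no vortices remain after the last one. -/
open Finset
open scoped Classical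

noncomputable section

abbrev E2 := EuclideanSpace ℝ (Fin 2)
abbrev E3 := EuclideanSpace ℝ (Fin 3)

/-- Velocity field of the planar point-vortex gradient flow. -/
def pvVel {N : ℕ} (d : Fin N → ℤ) (q : Fin N → E2) (i : Fin N) : E2 :=
  ((1 + ‖q i‖ ^ 2) ^ 2 / 2) •
    ((1 + ‖q i‖ ^ 2)⁻¹ • q i +
      (d i : ℝ) • ∑ j ∈ univ.erase i, (d j : ℝ) • (‖q i - q j‖ ^ 2)⁻¹ • (q i - q j))

/-- Inverse stereographic projection: the sphere point corresponding to `p ∈ ℝ²`. -/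
def sph (p : E2) : E3 :=
  (WithLp.equiv 2 (Fin 3 → ℝ)).symm
    ![2 * p 0 / (1 + ‖p‖ ^ 2), 2 * p 1 / (1 + ‖p‖ ^ 2), (‖p‖ ^ 2 - 1) / (1 + ‖p‖ ^ 2)]
/-- A continued trajectory of the planar point-vortex gradient flow on `S²` (in
stereographic coordinates), starting from `2n` vortices of degrees `±1` summing to zero:
there are collision times `0 = T 0 < T 1 < ⋯ < T m`; on each interval
`[T k, T (k+1))` (and on `[T m, ∞)` for the last stage) the `N k` vortices solve the
point-vortex gradient flow with pairwise distinct positions, extending continuously to the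
collision time; at each collision time the vortices are grouped into clusters by
coincidence of limit positions, some cluster has at least two vortices, every cluster has
total degree in `{-1,0,1}` (hypothesis (H)), clusters of total degree `0` are deleted and
clusters of total degree `±1` are replaced by a single vortex of that degree at the common
limit position (the cluster map is `cl`, sending each old vortex to its successor, or to
`none` if its cluster is annihilated). -/
structure PVTrajectory (n : ℕ) where
  /-- number of collision times -/
  m : ℕ
  /-- `T 0 = 0` and `T 1 < ⋯ < T m` are the collision times -/
  T : ℕ → ℝ
  /-- number of vortices at stage `k` -/
  N : ℕ → ℕ
  /-- degrees of the stage-`k` vortices -/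
  deg : (k : ℕ) → Fin (N k) → ℤ
  /-- positions of the stage-`k` vortices -/
  pos : (k : ℕ) → ℝ → Fin (N k) → E2
  /-- limit positions of the stage-`k` vortices as `t → T (k+1)⁻` -/
  lim : (k : ℕ) → Fin (N k) → E2
  /-- the cluster/successor map at the collision time `T (k+1)` -/
  cl : (k : ℕ) → Fin (N k) → Option (Fin (N (k + 1)))
  T_zero : T 0 = 0
  T_mono : ∀ k < m, T k < T (k + 1)
  N_zero : N 0 = 2 * n
  deg_pm : ∀ k ≤ m, ∀ i, deg k i = 1 ∨ deg k i = -1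
  deg_sum : ∀ k ≤ m, ∑ i, deg k i = 0
  distinct : ∀ k < m, ∀ t ∈ Set.Ico (T k) (T (k + 1)),
    ∀ i j : Fin (N k), i ≠ j → pos k t i ≠ pos k t j
  ode : ∀ k < m, ∀ t ∈ Set.Ico (T k) (T (k + 1)), ∀ i : Fin (N k),
    HasDerivWithinAt (fun s => pos k s i)
      (pvVel (deg k) (fun j => pos k t j) i) (Set.Ico (T k) (T (k + 1))) t
  distinct_last : ∀ t ∈ Set.Ici (T m), ∀ i j : Fin (N m), i ≠ j → pos m t i ≠ pos m t j
  ode_last : ∀ t ∈ Set.Ici (T m), ∀ i : Fin (N m),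
    HasDerivWithinAt (fun s => pos m s i)
      (pvVel (deg m) (fun j => pos m t j) i) (Set.Ici (T m)) t
  lim_spec : ∀ k < m, ∀ i : Fin (N k),
    Filter.Tendsto (fun s => pos k s i)
      (nhdsWithin (T (k + 1)) (Set.Iio (T (k + 1)))) (nhds (lim k i))
  /-- at each collision time some cluster contains at least two vortices -/
  collide : ∀ k < m, ∃ i j : Fin (N k), i ≠ j ∧ lim k i = lim k j
  /-- hypothesis (H): every cluster has total degree in `{-1,0,1}` -/
  hypH : ∀ k < m, ∀ i : Fin (N k),
    (∑ j ∈ univ.filter fun j => lim k j = lim k i, deg k j) ∈ ({-1, 0, 1} : Set ℤ)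
  /-- vortices in the same cluster have the same successor -/
  cl_resp : ∀ k < m, ∀ i j : Fin (N k), lim k i = lim k j → cl k i = cl k j
  /-- vortices with the same successor are in the same cluster -/
  cl_inj : ∀ k < m, ∀ i j : Fin (N k), ∀ v : Fin (N (k + 1)),
    cl k i = some v → cl k j = some v → lim k i = lim k j
  /-- every stage-`(k+1)` vortex arises from a cluster -/
  cl_surj : ∀ k < m, ∀ v : Fin (N (k + 1)), ∃ i : Fin (N k), cl k i = some v
  /-- exactly the clusters of total degree `0` are annihilated -/
  cl_none : ∀ k < m, ∀ i : Fin (N k),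
    cl k i = none ↔ (∑ j ∈ univ.filter fun j => lim k j = lim k i, deg k j) = 0
  /-- the successor vortex carries the total degree of its cluster -/
  cl_deg : ∀ k < m, ∀ i : Fin (N k), ∀ v : Fin (N (k + 1)), cl k i = some v →
    deg (k + 1) v = ∑ j ∈ univ.filter fun j => lim k j = lim k i, deg k j
  /-- the successor vortex starts at the common limit position of its cluster -/
  cl_pos : ∀ k < m, ∀ i : Fin (N k), ∀ v : Fin (N (k + 1)), cl k i = some v →
    pos (k + 1) (T (k + 1)) v = lim k i

def uu (p : E2) : ℝ := (‖p‖ ^ 2 - 1) / (1 + ‖p‖ ^ 2)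

lemma one_add_norm_sq_pos (p : E2) : 0 < 1 + ‖p‖ ^ 2 := by positivity

lemma uu_ge (p : E2) : -1 ≤ uu p := by
  rw [uu, le_div_iff₀ (one_add_norm_sq_pos p)]
  nlinarith [sq_nonneg ‖p‖]

lemma uu_cont : Continuous uu := by
  apply Continuous.div (by continuity) (by continuity)
  intro p; positivity

lemma hasDerivWithinAt_uu {f : ℝ → E2} {v : E2} {s : Set ℝ} {t : ℝ}
    (hf : HasDerivWithinAt f v s t) :
    HasDerivWithinAt (fun τ => uu (f τ))
      (4 * (inner ℝ (f t) v : ℝ) / (1 + ‖f t‖ ^ 2) ^ 2) s t := by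
  have hR : HasDerivWithinAt (fun τ => (inner ℝ (f τ) (f τ) : ℝ))
      ((inner ℝ (f t) v : ℝ) + (inner ℝ v (f t) : ℝ)) s t := hf.inner ℝ hf
  have hip : (inner ℝ v (f t) : ℝ) = (inner ℝ (f t) v : ℝ) := real_inner_comm _ _
  have hnum : HasDerivWithinAt (fun τ => (inner ℝ (f τ) (f τ) : ℝ) - 1)
      (2 * (inner ℝ (f t) v : ℝ)) s t := by
    have := hR.sub_const 1
    rw [hip] at this; exact this.congr_deriv (by ring)
  have hden : HasDerivWithinAt (fun τ => 1 + (inner ℝ (f τ) (f τ) : ℝ))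
      (2 * (inner ℝ (f t) v : ℝ)) s t := by
    have := hR.const_add 1
    rw [hip] at this; exact this.congr_deriv (by ring)
  have hden_ne : 1 + (inner ℝ (f t) (f t) : ℝ) ≠ 0 := by
    rw [real_inner_self_eq_norm_sq]; positivity
  have hq := hnum.div hden hden_ne
  have : HasDerivWithinAt (fun τ => ((inner ℝ (f τ) (f τ) : ℝ) - 1) / (1 + (inner ℝ (f τ) (f τ) : ℝ)))
      (4 * (inner ℝ (f t) v : ℝ) / (1 + ‖f t‖ ^ 2) ^ 2) s t := by
    refine hq.congr_deriv ?_
    rw [← real_inner_self_eq_norm_sq]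
    field_simp
    ring
  convert this using 2 with τ
  rw [uu, real_inner_self_eq_norm_sq]

lemma vel_identity {N : ℕ} (d : Fin N → ℤ) (q : Fin N → E2)
    (hd : ∀ i, d i = 1 ∨ d i = -1)
    (hsum : ∑ i, d i = 0)
    (hq : ∀ i j : Fin N, i ≠ j → q i ≠ q j) :
    ∑ i, 4 * (inner ℝ (q i) (pvVel d q i) : ℝ) / (1 + ‖q i‖ ^ 2) ^ 2
      = ∑ i, uu (q i) := by
  have hpos : ∀ i : Fin N, (0:ℝ) < 1 + ‖q i‖ ^ 2 := fun i => by positivity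
  have hne : ∀ i j : Fin N, j ∈ univ.erase i → ‖q i - q j‖ ^ 2 ≠ 0 := by
    intro i j hj
    have h1 : q i ≠ q j := hq i j (Ne.symm (Finset.ne_of_mem_erase hj))
    exact pow_ne_zero 2 (norm_ne_zero_iff.mpr (sub_ne_zero_of_ne h1))
  have hinner : ∀ i : Fin N, (inner ℝ (q i) (pvVel d q i) : ℝ)
      = ((1 + ‖q i‖ ^ 2) ^ 2 / 2) *
        ((1 + ‖q i‖ ^ 2)⁻¹ * ‖q i‖ ^ 2 +
          (d i : ℝ) * ∑ j ∈ univ.erase i,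
            (d j : ℝ) * ((‖q i - q j‖ ^ 2)⁻¹ * (inner ℝ (q i) (q i - q j) : ℝ))) := by
    intro i
    rw [pvVel, real_inner_smul_right, inner_add_right, real_inner_smul_right,
      real_inner_smul_right, inner_sum, real_inner_self_eq_norm_sq]
    simp only [real_inner_smul_right]
  have hterm : ∀ i : Fin N,
      4 * (inner ℝ (q i) (pvVel d q i) : ℝ) / (1 + ‖q i‖ ^ 2) ^ 2
      = (1 + uu (q i)) + 2 * ∑ j ∈ univ.erase i,
          (d i : ℝ) * (d j : ℝ) * ((inner ℝ (q i) (q i - q j) : ℝ) / ‖q i - q j‖ ^ 2) := by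
    intro i
    rw [hinner i]
    set r2 := ‖q i‖ ^ 2 with hr2
    set B := ∑ j ∈ univ.erase i,
        (d j : ℝ) * ((‖q i - q j‖ ^ 2)⁻¹ * (inner ℝ (q i) (q i - q j) : ℝ)) with hB
    have h1 : (1 + r2) ≠ 0 := ne_of_gt (hpos i)
    have key : 4 * ((1 + r2) ^ 2 / 2 * ((1 + r2)⁻¹ * r2 + (d i : ℝ) * B)) / (1 + r2) ^ 2
        = (1 + (r2 - 1) / (1 + r2)) + 2 * ((d i : ℝ) * B) := by
      field_simp
      ring
    rw [key, uu]
    have hBe : (d i : ℝ) * B = ∑ j ∈ univ.erase i,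
        (d i : ℝ) * (d j : ℝ) * ((inner ℝ (q i) (q i - q j) : ℝ) / ‖q i - q j‖ ^ 2) := by
      rw [hB, Finset.mul_sum]
      refine Finset.sum_congr rfl fun j hj => ?_
      rw [div_eq_mul_inv]
      ring
    rw [hBe]
  rw [Finset.sum_congr rfl fun i _ => hterm i]
  rw [Finset.sum_add_distrib]
  -- now handle the interaction double sum
  set g : Fin N → Fin N → ℝ := fun i j =>
    (d i : ℝ) * (d j : ℝ) * ((inner ℝ (q i) (q i - q j) : ℝ) / ‖q i - q j‖ ^ 2) with hg
  have hswap : ∑ i, ∑ j ∈ univ.erase i, g i j = ∑ j, ∑ i ∈ univ.erase j, g i j :=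
    Finset.sum_comm' (by
      intro i j
      simp only [Finset.mem_univ, Finset.mem_erase, true_and, and_true]
      exact ne_comm)
  have hdd : ∀ i j : Fin N, i ≠ j → g i j + g j i = (d i : ℝ) * (d j : ℝ) := by
    intro i j hij
    have hn : ‖q i - q j‖ ^ 2 ≠ 0 := hne i j (by simp [Finset.mem_erase, Ne.symm hij])
    have hn' : ‖q j - q i‖ ^ 2 ≠ 0 := by rwa [← neg_sub, norm_neg]
    have hip : (inner ℝ (q i) (q i - q j) : ℝ) + (inner ℝ (q j) (q j - q i) : ℝ)
        = ‖q i - q j‖ ^ 2 := by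
      have : (inner ℝ (q i) (q i - q j) : ℝ) - (inner ℝ (q j) (q i - q j) : ℝ)
          = (inner ℝ (q i - q j) (q i - q j) : ℝ) := (inner_sub_left _ _ _).symm
      have h2 : (inner ℝ (q j) (q j - q i) : ℝ) = - (inner ℝ (q j) (q i - q j) : ℝ) := by
        rw [← inner_neg_right, neg_sub]
      rw [h2, real_inner_self_eq_norm_sq] at *
      linarith
    have hnn : ‖q j - q i‖ ^ 2 = ‖q i - q j‖ ^ 2 := by rw [← neg_sub, norm_neg]
    have hkey : (inner ℝ (q i) (q i - q j) : ℝ) / ‖q i - q j‖ ^ 2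
        + (inner ℝ (q j) (q j - q i) : ℝ) / ‖q i - q j‖ ^ 2 = 1 := by
      rw [← add_div, hip, div_self hn]
    calc g i j + g j i
        = (d i : ℝ) * (d j : ℝ) * ((inner ℝ (q i) (q i - q j) : ℝ) / ‖q i - q j‖ ^ 2
            + (inner ℝ (q j) (q j - q i) : ℝ) / ‖q i - q j‖ ^ 2) := by
          simp only [hg]; rw [hnn]; ring
      _ = (d i : ℝ) * (d j : ℝ) := by rw [hkey, mul_one]
  have hdouble : 2 * ∑ i, ∑ j ∈ univ.erase i, g i j = ∑ i, ∑ j ∈ univ.erase i, (d i : ℝ) * (d j : ℝ) := by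
    have : (∑ i, ∑ j ∈ univ.erase i, g i j) + (∑ i, ∑ j ∈ univ.erase i, g i j)
        = ∑ i, ∑ j ∈ univ.erase i, (g i j + g j i) := by
      nth_rewrite 1 [hswap]
      rw [← Finset.sum_add_distrib]
      refine Finset.sum_congr rfl fun i _ => ?_
      rw [← Finset.sum_add_distrib]
      refine Finset.sum_congr rfl fun j hj => ?_
      ring
    rw [two_mul, this]
    refine Finset.sum_congr rfl fun i _ => Finset.sum_congr rfl fun j hj => ?_
    exact hdd i j (Ne.symm (Finset.ne_of_mem_erase hj))
  have hdsum : ∑ i, ∑ j ∈ univ.erase i, (d i : ℝ) * (d j : ℝ) = - (N : ℝ) := by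
    have h1 : ∀ i : Fin N, ∑ j ∈ univ.erase i, (d j : ℝ) = - (d i : ℝ) := by
      intro i
      have := Finset.sum_erase_add univ (fun j => (d j : ℝ)) (Finset.mem_univ i)
      have h0 : ∑ j, (d j : ℝ) = 0 := by exact_mod_cast congrArg (Int.cast : ℤ → ℝ) hsum
      linarith
    have h2 : ∀ i : Fin N, (d i : ℝ) * (d i : ℝ) = 1 := by
      intro i; rcases hd i with h | h <;> rw [h] <;> norm_num
    calc ∑ i, ∑ j ∈ univ.erase i, (d i : ℝ) * (d j : ℝ)
        = ∑ i : Fin N, (d i : ℝ) * ∑ j ∈ univ.erase i, (d j : ℝ) := by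
          refine Finset.sum_congr rfl fun i _ => (Finset.mul_sum _ _ _).symm
      _ = ∑ i : Fin N, -((d i : ℝ) * (d i : ℝ)) := by
          refine Finset.sum_congr rfl fun i _ => by rw [h1 i]; ring
      _ = - (N : ℝ) := by simp [h2]
  have hA : ∑ i, (1 + uu (q i)) = (N : ℝ) + ∑ i, uu (q i) := by
    rw [Finset.sum_add_distrib]; simp
  have hB2 : ∑ i, 2 * ∑ j ∈ univ.erase i, g i j
      = 2 * ∑ i, ∑ j ∈ univ.erase i, g i j := (Finset.mul_sum _ _ _).symm
  rw [hA, hB2, hdouble, hdsum]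
  ring

lemma exp_solution {f : ℝ → ℝ} {a x : ℝ} (hax : a ≤ x)
    (hf : ∀ t ∈ Set.Icc a x, HasDerivWithinAt f (f t) (Set.Icc a x) t) :
    f x = f a * Real.exp (x - a) := by
  set g : ℝ → ℝ := fun t => f t * Real.exp (-t) with hgdef
  have hg : ∀ t ∈ Set.Icc a x, HasDerivWithinAt g 0 (Set.Icc a x) t := by
    intro t ht
    have he : HasDerivAt (fun τ : ℝ => Real.exp (-τ)) (-Real.exp (-t)) t := by
      have h1 := (hasDerivAt_neg t).exp
      rw [mul_neg_one] at h1
      exact h1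
    have := (hf t ht).mul (he.hasDerivWithinAt)
    exact this.congr_deriv (by ring)
  have hcont : ContinuousOn g (Set.Icc a x) := fun t ht => (hg t ht).continuousWithinAt
  have hderiv : ∀ t ∈ Set.Ico a x, HasDerivWithinAt g 0 (Set.Ici t) t := by
    intro t ht
    refine (hg t ⟨ht.1, le_of_lt ht.2⟩).mono_of_mem_nhdsWithin ?_
    rw [mem_nhdsWithin]
    exact ⟨Set.Iio x, isOpen_Iio, ht.2, fun y hy => ⟨le_trans ht.1 hy.2, le_of_lt hy.1⟩⟩
  have hgx : g x = g a := constant_of_has_deriv_right_zero hcont hderiv x ⟨hax, le_refl x⟩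
  have hex : Real.exp (-x) ≠ 0 := Real.exp_ne_zero _
  have : f x * Real.exp (-x) = f a * Real.exp (-a) := hgx
  have h2 : f x = f a * Real.exp (-a) * Real.exp x := by
    have hxx : Real.exp (-x) * Real.exp x = 1 := by rw [← Real.exp_add]; simp
    calc f x = f x * Real.exp (-x) * Real.exp x := by rw [mul_assoc, hxx, mul_one]
    _ = _ := by rw [this]
  rw [h2, Real.exp_sub]
  field_simp [Real.exp_neg]
  rw [mul_assoc, ← Real.exp_add]; simp

lemma fiber_bound {A B : ℕ} (cl : Fin A → Option (Fin B)) (L : Fin A → ℝ) (P : Fin B → ℝ)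
    (hL : ∀ i, -1 ≤ L i) (hP : ∀ v, -1 ≤ P v)
    (heq : ∀ i v, cl i = some v → L i = P v)
    (hsurj : ∀ v, ∃ i, cl i = some v) :
    (B : ℝ) ≤ (A : ℝ) ∧ ∑ v, P v ≤ (∑ i, L i) + ((A : ℝ) - (B : ℝ)) := by
  set c : Option (Fin B) → ℝ := fun o => ((univ.filter fun i => cl i = o).card : ℝ) with hc
  have hmaps : ∀ i ∈ (univ : Finset (Fin A)), cl i ∈ (univ : Finset (Option (Fin B))) :=
    fun i _ => mem_univ _
  have hA : (A : ℝ) = ∑ o : Option (Fin B), c o := by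
    have := Finset.card_eq_sum_card_fiberwise hmaps
    rw [Finset.card_univ, Fintype.card_fin] at this
    simp only [hc]
    exact_mod_cast congrArg (Nat.cast : ℕ → ℝ) this
  have hL1 : ∑ i, L i = ∑ o : Option (Fin B), ∑ i ∈ univ.filter fun i => cl i = o, L i :=
    (Finset.sum_fiberwise_of_maps_to hmaps L).symm
  have hsome : ∀ v : Fin B, ∑ i ∈ univ.filter fun i => cl i = some v, L i
      = c (some v) * P v := by
    intro v
    rw [Finset.sum_congr rfl (fun i hi => heq i v (Finset.mem_filter.mp hi).2),
      Finset.sum_const, nsmul_eq_mul]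
  have hone : ∀ v : Fin B, (1 : ℝ) ≤ c (some v) := by
    intro v
    obtain ⟨i, hi⟩ := hsurj v
    have : i ∈ univ.filter fun i => cl i = some v := Finset.mem_filter.mpr ⟨mem_univ i, hi⟩
    have hcard : 1 ≤ (univ.filter fun i => cl i = some v).card := Finset.card_pos.mpr ⟨i, this⟩
    simp only [hc]
    exact_mod_cast hcard
  have hnone : -(c none) ≤ ∑ i ∈ univ.filter fun i => cl i = none, L i := by
    have h1 : ∑ i ∈ univ.filter (fun i => cl i = none), (-1 : ℝ)
        ≤ ∑ i ∈ univ.filter fun i => cl i = none, L i :=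
      Finset.sum_le_sum fun i _ => hL i
    rw [Finset.sum_const, nsmul_eq_mul] at h1
    calc -(c none) = (c none) * (-1) := by ring
    _ ≤ _ := h1
  -- decompose over Option
  have huniv : (univ : Finset (Option (Fin B))) = insertNone univ := univ_option _
  have hAdec : (A : ℝ) = c none + ∑ v, c (some v) := by
    rw [hA, huniv, Finset.sum_insertNone]
  have hLdec : ∑ i, L i = (∑ i ∈ univ.filter fun i => cl i = none, L i)
      + ∑ v, c (some v) * P v := by
    rw [hL1, huniv, Finset.sum_insertNone]
    congr 1
    exact Finset.sum_congr rfl fun v _ => hsome v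
  have hBle : (B : ℝ) ≤ ∑ v, c (some v) := by
    calc (B : ℝ) = ∑ _v : Fin B, (1 : ℝ) := by simp
    _ ≤ _ := Finset.sum_le_sum fun v _ => hone v
  constructor
  · rw [hAdec]
    have : (0:ℝ) ≤ c none := by positivity
    linarith
  · have hptwise : ∀ v : Fin B, P v - (c (some v) - 1) ≤ c (some v) * P v := by
      intro v
      nlinarith [hP v, hone v]
    have hsum2 : ∑ v, (P v - (c (some v) - 1)) ≤ ∑ v, c (some v) * P v :=
      Finset.sum_le_sum fun v _ => hptwise v
    have hsplit : ∑ v, (P v - (c (some v) - 1))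
        = (∑ v, P v) - (∑ v, c (some v)) + (B : ℝ) := by
      rw [Finset.sum_sub_distrib, Finset.sum_sub_distrib, Finset.sum_const,
        Finset.card_univ, Fintype.card_fin, nsmul_eq_mul]
      ring
    rw [hLdec]
    rw [hsplit] at hsum2
    linarith [hnone, hAdec.ge]

lemma stage_exp {Nn : ℕ} {d : Fin Nn → ℤ} {P : ℝ → Fin Nn → E2} {s : Set ℝ} {a x : ℝ}
    (hax : a ≤ x) (hsub : Set.Icc a x ⊆ s)
    (hd : ∀ i, d i = 1 ∨ d i = -1) (hsum : ∑ i, d i = 0)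
    (hdist : ∀ t ∈ Set.Icc a x, ∀ i j : Fin Nn, i ≠ j → P t i ≠ P t j)
    (hode : ∀ t ∈ Set.Icc a x, ∀ i : Fin Nn,
      HasDerivWithinAt (fun τ => P τ i) (pvVel d (fun j => P t j) i) s t) :
    (∑ i, uu (P x i)) = (∑ i, uu (P a i)) * Real.exp (x - a) := by
  apply exp_solution hax
  intro t ht
  have h1 : HasDerivWithinAt (fun τ => ∑ i, uu (P τ i))
      (∑ i, 4 * (inner ℝ (P t i) (pvVel d (fun j => P t j) i) : ℝ) / (1 + ‖P t i‖ ^ 2) ^ 2)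
      (Set.Icc a x) t :=
    HasDerivWithinAt.fun_sum fun i _ => hasDerivWithinAt_uu ((hode t ht i).mono hsub)
  rwa [vel_identity d (fun j => P t j) hd hsum (hdist t ht)] at h1

set_option maxHeartbeats 1000000 in
/-- Annihilation time estimate: under the clustering assumption, with
`κ = n√(1-s²) - (n-1) ∈ (0,1]`, all vortices have been annihilated by time `ln(1/κ)`:
every collision time is at most `ln(1/κ)` and no vortices remain after the last one. -/
theorem annihilation_time_bound
    (n : ℕ) (hn : 1 ≤ n) (s : ℝ) (hs0 : 0 ≤ s) (hs1 : s < 1)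
    (hcap : Real.sqrt (1 - s ^ 2) > ((n : ℝ) - 1) / n)
    (κ : ℝ) (hκ : κ = n * Real.sqrt (1 - s ^ 2) - ((n : ℝ) - 1))
    (traj : PVTrajectory n)
    (hinit : ∀ i : Fin (traj.N 0),
      (‖traj.pos 0 0 i‖ ^ 2 - 1) / (1 + ‖traj.pos 0 0 i‖ ^ 2) ≤ -Real.sqrt (1 - s ^ 2)) :
    0 < κ ∧ κ ≤ 1 ∧ traj.N traj.m = 0 ∧
      ∀ k ≤ traj.m, traj.T k ≤ Real.log (1 / κ) := by
  have hσ0 : 0 ≤ Real.sqrt (1 - s ^ 2) := Real.sqrt_nonneg _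
  have hσ1 : Real.sqrt (1 - s ^ 2) ≤ 1 := by
    calc Real.sqrt (1 - s ^ 2) ≤ Real.sqrt 1 := Real.sqrt_le_sqrt (by nlinarith)
    _ = 1 := Real.sqrt_one
  have hn0 : (0:ℝ) < n := by exact_mod_cast hn
  have hκpos : 0 < κ := by
    rw [hκ]
    have := (div_lt_iff₀ hn0).mp hcap
    linarith
  have hκ1 : κ ≤ 1 := by rw [hκ]; nlinarith
  -- stage facts: value of the limit sum and its lower bound
  have stage : ∀ k, k < traj.m →
      ((∑ i, uu (traj.lim k i))
          = (∑ i, uu (traj.pos k (traj.T k) i)) * Real.exp (traj.T (k+1) - traj.T k) ∧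
        -(traj.N k : ℝ) ≤ ∑ i, uu (traj.lim k i)) := by
    intro k hk
    have hTlt := traj.T_mono k hk
    have hform : ∀ x ∈ Set.Ico (traj.T k) (traj.T (k+1)),
        (∑ i, uu (traj.pos k x i))
          = (∑ i, uu (traj.pos k (traj.T k) i)) * Real.exp (x - traj.T k) := by
      intro x hx
      have hsub : Set.Icc (traj.T k) x ⊆ Set.Ico (traj.T k) (traj.T (k+1)) :=
        fun y hy => ⟨hy.1, lt_of_le_of_lt hy.2 hx.2⟩
      exact stage_exp hx.1 hsub (traj.deg_pm k hk.le) (traj.deg_sum k hk.le)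
        (fun t ht => traj.distinct k hk t (hsub ht))
        (fun t ht i => traj.ode k hk t (hsub ht) i)
    have hf1 : Filter.Tendsto (fun t => ∑ i, uu (traj.pos k t i))
        (nhdsWithin (traj.T (k+1)) (Set.Iio (traj.T (k+1))))
        (nhds (∑ i, uu (traj.lim k i))) :=
      tendsto_finset_sum _ fun i _ =>
        (uu_cont.tendsto (traj.lim k i)).comp (traj.lim_spec k hk i)
    have hmem : Set.Ioo (traj.T k) (traj.T (k+1))
        ∈ nhdsWithin (traj.T (k+1)) (Set.Iio (traj.T (k+1))) :=
      Ioo_mem_nhdsLT_of_mem ⟨hTlt, le_refl _⟩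
    have hf2 : Filter.Tendsto (fun t => ∑ i, uu (traj.pos k t i))
        (nhdsWithin (traj.T (k+1)) (Set.Iio (traj.T (k+1))))
        (nhds ((∑ i, uu (traj.pos k (traj.T k) i)) * Real.exp (traj.T (k+1) - traj.T k))) := by
      have hbase : Filter.Tendsto
          (fun t : ℝ => (∑ i, uu (traj.pos k (traj.T k) i)) * Real.exp (t - traj.T k))
          (nhdsWithin (traj.T (k+1)) (Set.Iio (traj.T (k+1))))
          (nhds ((∑ i, uu (traj.pos k (traj.T k) i)) * Real.exp (traj.T (k+1) - traj.T k))) :=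
        (Continuous.tendsto (continuous_const.mul (Real.continuous_exp.comp
          (continuous_id.sub continuous_const))) _).mono_left nhdsWithin_le_nhds
      refine Filter.Tendsto.congr' ?_ hbase
      filter_upwards [hmem] with t ht
      exact (hform t ⟨le_of_lt ht.1, ht.2⟩).symm
    refine ⟨tendsto_nhds_unique hf1 hf2, ?_⟩
    refine ge_of_tendsto hf1 ?_
    filter_upwards [hmem] with t ht
    calc -(traj.N k : ℝ) = ∑ _i : Fin (traj.N k), (-1 : ℝ) := by simp
    _ ≤ ∑ i, uu (traj.pos k t i) := Finset.sum_le_sum fun i _ => uu_ge _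
  -- collision facts
  have coll : ∀ k, k < traj.m →
      ((traj.N (k+1) : ℝ) ≤ (traj.N k : ℝ) ∧
        (∑ v, uu (traj.pos (k+1) (traj.T (k+1)) v))
          ≤ (∑ i, uu (traj.lim k i)) + ((traj.N k : ℝ) - (traj.N (k+1) : ℝ))) := by
    intro k hk
    exact fiber_bound (traj.cl k) (fun i => uu (traj.lim k i))
      (fun v => uu (traj.pos (k+1) (traj.T (k+1)) v))
      (fun i => uu_ge _) (fun v => uu_ge _)
      (fun i v hiv => by
        show uu (traj.lim k i) = uu (traj.pos (k+1) (traj.T (k+1)) v)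
        rw [traj.cl_pos k hk i v hiv])
      (traj.cl_surj k hk)
  -- at each collision at least two vortices are present
  have hN2 : ∀ k, k < traj.m → (2:ℝ) ≤ (traj.N k : ℝ) := by
    intro k hk
    obtain ⟨i, j, hij, -⟩ := traj.collide k hk
    have hnt : Nontrivial (Fin (traj.N k)) := ⟨⟨i, j, hij⟩⟩
    have h2 := Fintype.one_lt_card (α := Fin (traj.N k))
    rw [Fintype.card_fin] at h2
    exact_mod_cast h2
  -- the invariant
  have inv : ∀ k, k ≤ traj.m →
      2*κ + ((traj.N k : ℝ) - 2) * Real.exp (-(traj.T k))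
        ≤ (-(∑ i, uu (traj.pos k (traj.T k) i))) * Real.exp (-(traj.T k)) := by
    intro k
    induction k with
    | zero =>
      intro _
      rw [traj.T_zero, neg_zero, Real.exp_zero, mul_one, mul_one]
      have hS : (∑ i, uu (traj.pos 0 0 i))
          ≤ ∑ _i : Fin (traj.N 0), (-Real.sqrt (1 - s ^ 2)) :=
        Finset.sum_le_sum fun i _ => hinit i
      rw [Finset.sum_const, Finset.card_univ, Fintype.card_fin, nsmul_eq_mul] at hS
      have hN0 : (traj.N 0 : ℝ) = 2 * n := by exact_mod_cast traj.N_zero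
      rw [hN0] at hS ⊢
      rw [hκ]
      nlinarith
    | succ k ih =>
      intro hk1
      have hk : k < traj.m := hk1
      specialize ih hk.le
      obtain ⟨hA1, hA2⟩ := stage k hk
      obtain ⟨hB1, hB2⟩ := coll k hk
      have h2N := hN2 k hk
      have hTlt := traj.T_mono k hk
      set E := Real.exp (traj.T (k+1) - traj.T k) with hE
      set e1 := Real.exp (-(traj.T (k+1))) with he1
      set e0 := Real.exp (-(traj.T k)) with he0
      have hEpos : 0 < E := Real.exp_pos _
      have he1pos : 0 < e1 := Real.exp_pos _
      have he0pos : 0 < e0 := Real.exp_pos _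
      have hE1 : 1 ≤ E := Real.one_le_exp (by linarith)
      have he0e1 : e0 = e1 * E := by
        rw [he0, he1, hE, ← Real.exp_add]; ring_nf
      have he1le : e1 ≤ e0 := by rw [he0e1]; nlinarith
      -- from coll and stage: new start sum bounded
      rw [hA1] at hB2
      set C := -(∑ i, uu (traj.pos k (traj.T k) i)) with hC
      set Snew := ∑ v, uu (traj.pos (k+1) (traj.T (k+1)) v) with hSnew
      have hold : (∑ i, uu (traj.pos k (traj.T k) i)) = -C := by rw [hC]; ring
      rw [hold] at hB2
      -- hB2 : Snew ≤ (-C) * E + (N k - N (k+1))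
      have g1 : (C*E - ((traj.N k : ℝ) - (traj.N (k+1) : ℝ))) * e1 ≤ (-Snew) * e1 :=
        mul_le_mul_of_nonneg_right (by linarith) he1pos.le
      have g2 : C*E*e1 = C*e0 := by rw [he0e1]; ring
      have g4 : ((traj.N k : ℝ) - 2)*e1 ≤ ((traj.N k : ℝ) - 2)*e0 :=
        mul_le_mul_of_nonneg_left he1le (by linarith)
      have g5 : ((traj.N k : ℝ) - (traj.N (k+1) : ℝ))*e1
          ≤ ((traj.N k : ℝ) - (traj.N (k+1) : ℝ))*e1 := le_refl _
      nlinarith [g1, g2, g4, ih]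
  -- time bound
  have hlog0 : 0 ≤ Real.log (1/κ) := by
    apply Real.log_nonneg
    rw [le_div_iff₀ hκpos]
    linarith
  have htb : ∀ k ≤ traj.m, traj.T k ≤ Real.log (1/κ) := by
    intro k hk
    cases k with
    | zero => rw [traj.T_zero]; exact hlog0
    | succ j =>
      have hj : j < traj.m := hk
      obtain ⟨hA1, hA2⟩ := stage j hj
      have hinv := inv j hj.le
      have h2N := hN2 j hj
      have hTlt := traj.T_mono j hj
      set c := -(∑ i, uu (traj.pos j (traj.T j) i)) with hc
      set E := Real.exp (traj.T (j+1) - traj.T j) with hE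
      have hEpos : 0 < E := Real.exp_pos _
      have hE1 : 1 ≤ E := Real.one_le_exp (by linarith)
      have hejpos : 0 < Real.exp (traj.T j) := Real.exp_pos _
      have hexpinv : Real.exp (-(traj.T j)) * Real.exp (traj.T j) = 1 := by
        rw [← Real.exp_add]; simp
      -- c ≥ 2κ exp(T j) + (N j - 2)
      have hclow : 2*κ * Real.exp (traj.T j) + ((traj.N j : ℝ) - 2) ≤ c := by
        have hm := mul_le_mul_of_nonneg_right hinv hejpos.le
        have e1 : ((traj.N j : ℝ) - 2) * (Real.exp (-(traj.T j)) * Real.exp (traj.T j))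
            = ((traj.N j : ℝ) - 2) := by rw [hexpinv, mul_one]
        have e2 : c * (Real.exp (-(traj.T j)) * Real.exp (traj.T j)) = c := by
          rw [hexpinv, mul_one]
        nlinarith [hm, e1, e2]
      -- c * E ≤ N j
      have hcE : c * E ≤ (traj.N j : ℝ) := by
        rw [hA1] at hA2
        have hold : (∑ i, uu (traj.pos j (traj.T j) i)) = -c := by rw [hc]; ring
        rw [hold] at hA2
        nlinarith [hA2]
      have hTsum : Real.exp (traj.T j) * E = Real.exp (traj.T (j+1)) := by
        rw [hE, ← Real.exp_add]; ring_nf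
      have hfinal : 2 * κ * Real.exp (traj.T (j+1)) ≤ 2 := by
        have s1 := mul_le_mul_of_nonneg_right hclow hEpos.le
        have s2 : ((traj.N j : ℝ) - 2) ≤ ((traj.N j : ℝ) - 2)*E :=
          le_mul_of_one_le_right (by linarith) hE1
        have s3 : 2*κ*(Real.exp (traj.T j)*E) = 2*κ*Real.exp (traj.T (j+1)) := by
          rw [hTsum]
        nlinarith [s1, s2, s3, hcE]
      have hexple : Real.exp (traj.T (j+1)) ≤ 1/κ := by
        rw [le_div_iff₀ hκpos]
        nlinarith
      calc traj.T (j+1) = Real.log (Real.exp (traj.T (j+1))) := (Real.log_exp _).symm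
      _ ≤ Real.log (1/κ) := Real.log_le_log (Real.exp_pos _) hexple
  -- no vortices remain
  have hNm : traj.N traj.m = 0 := by
    by_contra hne0
    have h1 : 1 ≤ traj.N traj.m := Nat.one_le_iff_ne_zero.mpr hne0
    have h2 : 2 ≤ traj.N traj.m := by
      rcases Nat.lt_or_ge (traj.N traj.m) 2 with hlt | hge
      · exfalso
        have hNm1 : traj.N traj.m = 1 := by omega
        have hdsum := traj.deg_sum traj.m le_rfl
        have i0 : Fin (traj.N traj.m) := ⟨0, by omega⟩
        have hall : ∀ j : Fin (traj.N traj.m), j = i0 := by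
          intro j; apply Fin.ext; omega
        have hsum1 : ∑ i, traj.deg traj.m i = traj.deg traj.m i0 :=
          Finset.sum_eq_single_of_mem i0 (Finset.mem_univ _)
            (fun b _ hb => absurd (hall b) hb)
        rcases traj.deg_pm traj.m le_rfl i0 with h | h <;> omega
      · exact hge
    have hinvm := inv traj.m le_rfl
    set cm := -(∑ i, uu (traj.pos traj.m (traj.T traj.m) i)) with hcm
    have hempos : 0 < Real.exp (-(traj.T traj.m)) := Real.exp_pos _
    have h2R : (2:ℝ) ≤ (traj.N traj.m : ℝ) := by exact_mod_cast h2
    have hcmpos : 0 < cm := by nlinarith [hinvm]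
    -- last stage: blow up
    set x := traj.T traj.m + Real.log ((traj.N traj.m : ℝ)/cm + 1) with hx
    have hdiv0 : 0 ≤ (traj.N traj.m : ℝ)/cm := by positivity
    have hlogpos : 0 ≤ Real.log ((traj.N traj.m : ℝ)/cm + 1) :=
      Real.log_nonneg (by linarith)
    have hax : traj.T traj.m ≤ x := by rw [hx]; linarith
    have hsub : Set.Icc (traj.T traj.m) x ⊆ Set.Ici (traj.T traj.m) :=
      fun y hy => hy.1
    have hform := stage_exp hax hsub (traj.deg_pm traj.m le_rfl)
      (traj.deg_sum traj.m le_rfl)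
      (fun t ht => traj.distinct_last t (hsub ht))
      (fun t ht i => traj.ode_last t (hsub ht) i)
    have hexp : Real.exp (x - traj.T traj.m) = (traj.N traj.m : ℝ)/cm + 1 := by
      rw [hx]
      rw [show traj.T traj.m + Real.log ((traj.N traj.m : ℝ)/cm + 1) - traj.T traj.m
          = Real.log ((traj.N traj.m : ℝ)/cm + 1) by ring]
      exact Real.exp_log (by linarith)
    have hlb : -(traj.N traj.m : ℝ) ≤ ∑ i, uu (traj.pos traj.m x i) := by
      calc -(traj.N traj.m : ℝ) = ∑ _i : Fin (traj.N traj.m), (-1 : ℝ) := by simp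
      _ ≤ _ := Finset.sum_le_sum fun i _ => uu_ge _
    rw [hform, hexp] at hlb
    -- (∑ start) = -cm, so RHS = -cm * (N/cm + 1) = -N - cm
    have hstart : (∑ i, uu (traj.pos traj.m (traj.T traj.m) i)) = -cm := by
      rw [hcm]; ring
    rw [hstart] at hlb
    have hcmne : cm ≠ 0 := ne_of_gt hcmpos
    have : -cm * ((traj.N traj.m : ℝ)/cm + 1) = -(traj.N traj.m : ℝ) - cm := by
      field_simp
      ring
    rw [this] at hlb
    linarith
  exact ⟨hκpos, hκ1, hNm, htb⟩
end
end

section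
/- Let c ∈ ℝ, c ≠ 0, and let J ⊆ ℝ be an interval of times t on which 1 − c e^t > 0 and (1 + c e^t)/(1 − c e^t) > 0. Define q(t) = √((1 + c e^t)/(1 − c e^t)) for t ∈ J. Then q satisfies q'(t) = (q(t)⁴ − 1)/(4 q(t)), and consequently the pair p_1(t) = (q(t), 0), p_2(t) = (−q(t), 0) with degrees d_1 = 1, d_2 = −1 is an explicit solution of the planar point-vortex gradient flow with n = 1 on J. -/
open Finset

noncomputable section

/-- The two positions `(q t, 0)` and `(-q t, 0)` in the plane. -/
def pairPos (q : ℝ → ℝ) (t : ℝ) : Fin 2 → E2 :=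
  ![(WithLp.equiv 2 (Fin 2 → ℝ)).symm ![q t, 0],
    (WithLp.equiv 2 (Fin 2 → ℝ)).symm ![-q t, 0]]

lemma pv_nsq (a : ℝ) : ‖(WithLp.equiv 2 (Fin 2 → ℝ)).symm ![a,0]‖^2 = a^2 := by
  rw [EuclideanSpace.norm_eq, Real.sq_sqrt (by positivity)]
  simp [Fin.sum_univ_two]

lemma pv_vel0 (q : ℝ → ℝ) (t : ℝ) (hq0 : 0 < q t) :
    pvVel ![1, -1] (pairPos q t) 0
      = ((q t ^ 4 - 1) / (4 * q t)) • (WithLp.equiv 2 (Fin 2 → ℝ)).symm ![(1:ℝ),0] := by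
  have he : (univ.erase (0 : Fin 2)) = {1} := by decide
  have hd : ‖(WithLp.equiv 2 (Fin 2 → ℝ)).symm ![q t, 0] - (WithLp.equiv 2 (Fin 2 → ℝ)).symm ![-q t, 0]‖^2 = (2 * q t)^2 := by
    rw [show (WithLp.equiv 2 (Fin 2 → ℝ)).symm ![q t, 0] - (WithLp.equiv 2 (Fin 2 → ℝ)).symm ![-q t, 0]
         = (WithLp.equiv 2 (Fin 2 → ℝ)).symm ![2 * q t, 0] by ext i; fin_cases i <;> simp <;> ring, pv_nsq]
  have hn : ‖!₂[q t, 0]‖ = q t := (pow_left_inj₀ (norm_nonneg _) hq0.le two_ne_zero).1 (pv_nsq (q t))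
  have hd' : ‖!₂[q t, 0] - !₂[-q t, 0]‖ = 2 * q t :=
    (pow_left_inj₀ (norm_nonneg _) (by positivity) two_ne_zero).1 hd
  ext i
  fin_cases i <;>
    simp [pvVel, he, pairPos, hd, pv_nsq, hn, hd'] <;>
    field_simp <;> ring

lemma pv_vel1 (q : ℝ → ℝ) (t : ℝ) (hq0 : 0 < q t) :
    pvVel ![1, -1] (pairPos q t) 1
      = (-((q t ^ 4 - 1) / (4 * q t))) • (WithLp.equiv 2 (Fin 2 → ℝ)).symm ![(1:ℝ),0] := by
  have he : (univ.erase (1 : Fin 2)) = {0} := by decide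
  have hd : ‖(WithLp.equiv 2 (Fin 2 → ℝ)).symm ![-q t, 0] - (WithLp.equiv 2 (Fin 2 → ℝ)).symm ![q t, 0]‖^2 = (2 * q t)^2 := by
    rw [show (WithLp.equiv 2 (Fin 2 → ℝ)).symm ![-q t, 0] - (WithLp.equiv 2 (Fin 2 → ℝ)).symm ![q t, 0]
         = (WithLp.equiv 2 (Fin 2 → ℝ)).symm ![-(2 * q t), 0] by ext i; fin_cases i <;> simp <;> ring, pv_nsq]
    ring
  have hn : ‖!₂[-q t, 0]‖ = q t :=
    (pow_left_inj₀ (norm_nonneg _) hq0.le two_ne_zero).1 ((pv_nsq (-q t)).trans (neg_sq _))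
  have hd' : ‖!₂[-q t, 0] - !₂[q t, 0]‖ = 2 * q t :=
    (pow_left_inj₀ (norm_nonneg _) (by positivity) two_ne_zero).1 hd
  ext i
  fin_cases i <;>
    simp [pvVel, he, pairPos, hd, pv_nsq, hn, hd'] <;>
    field_simp <;> ring

/-- With `q(t) = √((1+ceᵗ)/(1-ceᵗ))` on an interval where both `1-ceᵗ > 0` and
`(1+ceᵗ)/(1-ceᵗ) > 0`, one has `q' = (q⁴-1)/(4q)`, and the pair `p₁ = (q,0)`,
`p₂ = (-q,0)` with degrees `1, -1` is an explicit solution of the planar point-vortex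
gradient flow with `n = 1`. -/
theorem explicit_two_vortex_solution
    (c : ℝ) (hc : c ≠ 0) (J : Set ℝ) (hJ : J.OrdConnected)
    (hpos : ∀ t ∈ J, 0 < 1 - c * Real.exp t ∧ 0 < (1 + c * Real.exp t) / (1 - c * Real.exp t))
    (q : ℝ → ℝ)
    (hq : ∀ t, q t = Real.sqrt ((1 + c * Real.exp t) / (1 - c * Real.exp t))) :
    ∀ t ∈ J,
      HasDerivAt q ((q t ^ 4 - 1) / (4 * q t)) t ∧
      (∀ i j : Fin 2, i ≠ j → pairPos q t i ≠ pairPos q t j) ∧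
      (∀ i : Fin 2, HasDerivAt (fun s => pairPos q s i)
        (pvVel ![1, -1] (pairPos q t) i) t) := by
  intro t ht
  obtain ⟨hb, hr⟩ := hpos t ht
  -- derivative of q
  have hexp := Real.hasDerivAt_exp t
  have hNum : HasDerivAt (fun s => 1 + c * Real.exp s) (c * Real.exp t) t :=
    (hexp.const_mul c).const_add 1
  have hDen : HasDerivAt (fun s => 1 - c * Real.exp s) (-(c * Real.exp t)) t :=
    (hexp.const_mul c).const_sub 1
  have hg := hNum.div hDen hb.ne'
  have hsq := (Real.hasDerivAt_sqrt hr.ne').comp t hg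
  have hq0 : 0 < q t := by rw [hq]; exact Real.sqrt_pos.mpr hr
  have hq2 : q t ^ 2 * (1 - c * Real.exp t) = 1 + c * Real.exp t := by
    rw [hq, Real.sq_sqrt hr.le, div_mul_cancel₀ _ hb.ne']
  have hfun : (fun s => Real.sqrt ((1 + c * Real.exp s) / (1 - c * Real.exp s))) = q :=
    funext fun s => (hq s).symm
  have key : 1 / (2 * Real.sqrt ((1 + c * Real.exp t) / (1 - c * Real.exp t))) *
      ((c * Real.exp t * (1 - c * Real.exp t) - (1 + c * Real.exp t) * -(c * Real.exp t)) /
        (1 - c * Real.exp t) ^ 2) = (q t ^ 4 - 1) / (4 * q t) := by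
    rw [← hq t]
    field_simp
    linear_combination (-2 * (q t ^ 2 * (1 - c * Real.exp t) + (1 + c * Real.exp t))) * hq2
  have hqd : HasDerivAt q ((q t ^ 4 - 1) / (4 * q t)) t := by
    rw [← key]
    simpa [Function.comp_def, hfun] using hsq
  refine ⟨hqd, ?_, ?_⟩
  · intro i j hij h
    have h0 := congrArg (· 0) h
    fin_cases i <;> fin_cases j <;> simp [pairPos] at h0 hij ⊢ <;> nlinarith [hq0]
  · set v : E2 := (WithLp.equiv 2 (Fin 2 → ℝ)).symm ![(1:ℝ),0] with hv
    intro i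
    fin_cases i
    · show HasDerivAt (fun s => pairPos q s 0) (pvVel ![1, -1] (pairPos q t) 0) t
      have h1 : (fun s => pairPos q s 0) = fun s => q s • v := by
        funext s; ext k; fin_cases k <;> simp [pairPos, hv]
      rw [pv_vel0 q t hq0, ← hv, h1]
      exact hqd.smul_const v
    · show HasDerivAt (fun s => pairPos q s 1) (pvVel ![1, -1] (pairPos q t) 1) t
      have h1 : (fun s => pairPos q s 1) = fun s => (-q s) • v := by
        funext s; ext k; fin_cases k <;> simp [pairPos, hv]
      rw [pv_vel1 q t hq0]
      have := (hqd.neg).smul_const v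
      rw [← hv, h1]
      simpa [neg_smul] using this
end
end

section
/- Let N ≥ 2, let b_1,…,b_N ∈ ℝ² be pairwise distinct, and let d_1,…,d_N ∈ {1,−1} with Σ_{i=1}^N d_i = 0. Let f(x) = ln(2/(1+|x|²)) and let P_i = (2b_i/(1+|b_i|²), (|b_i|²−1)/(1+|b_i|²)) ∈ S² ⊂ ℝ³ be the inverse stereographic projections of the b_i. Then the renormalized energy satisfies π Σ_{i=1}^N d_i² f(b_i) − π Σ_{i≠j} d_i d_j ln|b_i − b_j| = −π Σ_{i≠j} d_i d_j ln|P_i − P_j|, where |P_i − P_j| is the Euclidean (chordal) distance in ℝ³. -/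
open Finset

noncomputable section

lemma normsq_E2 (x : E2) : ‖x‖^2 = x 0 ^2 + x 1 ^2 := by
  rw [EuclideanSpace.norm_eq, Real.sq_sqrt (by positivity)]
  simp [Fin.sum_univ_two, sq_abs]

lemma normsq_E3 (x : E3) : ‖x‖^2 = x 0 ^2 + x 1 ^2 + x 2 ^2 := by
  rw [EuclideanSpace.norm_eq, Real.sq_sqrt (by positivity)]
  simp [Fin.sum_univ_three, sq_abs]

lemma sph_sub_sq (p q : E2) :
    ‖sph p - sph q‖^2 * ((1+‖p‖^2)*(1+‖q‖^2)) = 4 * ‖p - q‖^2 := by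
  have hp : (0:ℝ) < 1 + ‖p‖^2 := by positivity
  have hq : (0:ℝ) < 1 + ‖q‖^2 := by positivity
  have hps : ‖p‖^2 = p 0 ^2 + p 1 ^2 := normsq_E2 p
  have hqs : ‖q‖^2 = q 0 ^2 + q 1 ^2 := normsq_E2 q
  have hpq : ‖p - q‖^2 = (p 0 - q 0)^2 + (p 1 - q 1)^2 := by
    rw [normsq_E2]; simp
  rw [normsq_E3, hpq]
  simp only [sph, PiLp.sub_apply, WithLp.equiv_symm_apply, PiLp.toLp_apply]
  simp only [Matrix.cons_val_zero, Matrix.cons_val_one, Matrix.head_cons,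
    Matrix.cons_val_two, Matrix.tail_cons]
  rw [hps, hqs] at *
  field_simp
  ring

lemma log_sph_sub (p q : E2) (hpq : p ≠ q) :
    Real.log ‖sph p - sph q‖ = Real.log 2 + Real.log ‖p - q‖
      - Real.log (1+‖p‖^2)/2 - Real.log (1+‖q‖^2)/2 := by
  have hp : (0:ℝ) < 1 + ‖p‖^2 := by positivity
  have hq : (0:ℝ) < 1 + ‖q‖^2 := by positivity
  have hd : (0:ℝ) < ‖p - q‖ := by
    simpa [sub_ne_zero.mpr hpq] using norm_pos_iff.mpr (sub_ne_zero.mpr hpq)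
  have hkey := sph_sub_sq p q
  have hs : (0:ℝ) < ‖sph p - sph q‖ := by
    rcases (norm_nonneg (sph p - sph q)).lt_or_eq with h | h
    · exact h
    · exfalso; rw [← h] at hkey; simp at hkey
      exact absurd hkey (sub_ne_zero.mpr hpq)
  have hlog := congrArg Real.log hkey
  rw [Real.log_mul (by positivity) (by positivity),
      Real.log_mul (by positivity) (by positivity),
      Real.log_mul (by norm_num) (by positivity),
      Real.log_pow, Real.log_pow] at hlog
  have h4 : Real.log 4 = 2 * Real.log 2 := by
    rw [show (4:ℝ) = 2^2 by norm_num, Real.log_pow]; push_cast; ring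
  rw [h4] at hlog
  push_cast at hlog
  linarith


open Real in
/-- On `S²` with conformal factor `f(x) = ln(2/(1+|x|²))`, the renormalized energy equals
`-π Σ_{i≠j} d_i d_j ln|P_i - P_j|`, where `|P_i - P_j|` is the chordal distance between
the inverse stereographic projections. -/
theorem renormalized_energy_chordal
    (N : ℕ) (hN : 2 ≤ N) (b : Fin N → E2) (d : Fin N → ℤ)
    (hb : ∀ i j, i ≠ j → b i ≠ b j)
    (hd : ∀ i, d i = 1 ∨ d i = -1) (hdsum : ∑ i, d i = 0) :
    π * ∑ i, (d i : ℝ) ^ 2 * Real.log (2 / (1 + ‖b i‖ ^ 2))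
      - π * ∑ i, ∑ j ∈ univ.erase i, (d i : ℝ) * (d j : ℝ) * Real.log ‖b i - b j‖
    = -(π * ∑ i, ∑ j ∈ univ.erase i,
          (d i : ℝ) * (d j : ℝ) * Real.log ‖sph (b i) - sph (b j)‖) := by
  set c : Fin N → ℝ := fun i => (d i : ℝ) with hc
  set L : Fin N → ℝ := fun i => Real.log (1 + ‖b i‖^2) with hL
  have hc2 : ∀ i, c i ^ 2 = 1 := by
    intro i; rcases hd i with h | h <;> simp [hc, h]
  have hcsum : ∑ i, c i = 0 := by
    simp only [hc]; exact_mod_cast hdsum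
  set K : ℝ := ∑ j, c j * L j with hK
  set S : ℝ := ∑ i, ∑ j ∈ univ.erase i, c i * c j * Real.log ‖b i - b j‖ with hS
  -- rewrite the chordal log sum
  have hrw : ∑ i, ∑ j ∈ univ.erase i, c i * c j * Real.log ‖sph (b i) - sph (b j)‖
      = S + ∑ i, ∑ j ∈ univ.erase i, c i * c j * (Real.log 2 - L i/2 - L j/2) := by
    rw [hS, ← Finset.sum_add_distrib]
    refine Finset.sum_congr rfl fun i _ => ?_
    rw [← Finset.sum_add_distrib]
    refine Finset.sum_congr rfl fun j hj => ?_
    have hij : i ≠ j := fun h => (Finset.ne_of_mem_erase hj) h.symm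
    rw [log_sph_sub _ _ (hb i j hij)]
    ring
  have hinner : ∀ i : Fin N, ∑ j ∈ univ.erase i, c i * c j * (Real.log 2 - L i/2 - L j/2)
      = - c i * K / 2 - (Real.log 2 - L i) := by
    intro i
    rw [Finset.sum_erase_eq_sub (Finset.mem_univ i)]
    have hfull : ∑ j, c i * c j * (Real.log 2 - L i/2 - L j/2) = - c i * K / 2 := by
      have : ∀ j, c i * c j * (Real.log 2 - L i/2 - L j/2)
          = (c i * (Real.log 2 - L i/2)) * c j - (c i / 2) * (c j * L j) := by
        intro j; ring
      rw [Finset.sum_congr rfl fun j _ => this j, Finset.sum_sub_distrib,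
          ← Finset.mul_sum, ← Finset.mul_sum, hcsum, ← hK]
      ring
    rw [hfull]
    have h1 : c i * c i = 1 := by rw [← sq]; exact hc2 i
    rw [h1, one_mul]; ring
  have houter : ∑ i, ∑ j ∈ univ.erase i, c i * c j * (Real.log 2 - L i/2 - L j/2)
      = - ∑ i, (Real.log 2 - L i) := by
    rw [Finset.sum_congr rfl fun i _ => hinner i, Finset.sum_sub_distrib]
    have h2 : ∑ i, - c i * K / 2 = (∑ i, c i) * (-K / 2) := by
      rw [Finset.sum_mul]
      exact Finset.sum_congr rfl fun i _ => by ring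
    rw [h2, hcsum]
    ring
  have hlhs : ∑ i, c i ^ 2 * Real.log (2 / (1 + ‖b i‖^2)) = ∑ i, (Real.log 2 - L i) := by
    refine Finset.sum_congr rfl fun i _ => ?_
    rw [hc2 i, Real.log_div (by norm_num) (by positivity)]
    simp [hL]
  rw [hrw, houter, hlhs] at *
  ring
end
end
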